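/- Under HER(p), the expectation of the degree variance V = (1/n) Σ_i (D_i − D̄)² equals (2(n−2)/n²) Σ_{i<j} p_{ij} + (2(n−4)/n²) Σ_{i<j<k} (p_{ij}p_{ik} + p_{ij}p_{jk} + p_{ik}p_{jk}) − (8/n²) Σ_{i<j<k<l} (p_{ij}p_{kl} + p_{ik}p_{jl} + p_{il}p_{jk}). -/

import Mathlib

open Finset

section Helpers
variable {n : ℕ}

lemma sum3_swap12 (f : Fin n → Fin n → Fin n → ℝ) :
    ∑ i, ∑ j, ∑ k, f i j k = ∑ j, ∑ i, ∑ k, f i j k := Finset.sum_comm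

lemma sum3_swap23 (f : Fin n → Fin n → Fin n → ℝ) :
    ∑ i, ∑ j, ∑ k, f i j k = ∑ i, ∑ k, ∑ j, f i j k :=
  Finset.sum_congr rfl fun _ _ => Finset.sum_comm

lemma sum3_rot (f : Fin n → Fin n → Fin n → ℝ) :
    ∑ i, ∑ j, ∑ k, f i j k = ∑ j, ∑ k, ∑ i, f i j k := by
  rw [sum3_swap12]; exact Finset.sum_congr rfl fun _ _ => Finset.sum_comm

lemma sum3_rot' (f : Fin n → Fin n → Fin n → ℝ) :
    ∑ i, ∑ j, ∑ k, f i j k = ∑ k, ∑ i, ∑ j, f i j k := by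
  rw [sum3_rot, sum3_rot]

lemma ite_sum {P : Prop} [Decidable P] (s : Finset (Fin n)) (h : Fin n → ℝ) :
    (if P then (∑ k ∈ s, h k) else 0) = ∑ k ∈ s, if P then h k else 0 := by
  by_cases hP : P <;> simp [hP]

end Helpers

section Comb
variable {n : ℕ} (p : Fin n → Fin n → ℝ)

/-- pair identity: 2 * sorted sum = full sum -/
lemma comb_pair (hpsym : ∀ i j, p i j = p j i) (hpdiag : ∀ i, p i i = 0) :
    2 * (∑ i, ∑ j ∈ univ.filter (fun j => i < j), p i j) = ∑ i, ∑ j, p i j := by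
  have key : ∀ i j : Fin n, p i j =
      (if i < j then p i j else 0) + (if j < i then p i j else 0) := by
    intro i j
    rcases lt_trichotomy i j with h | h | h
    · simp [h, asymm h]
    · simp [h, hpdiag]
    · simp [h, asymm h]
  calc 2 * (∑ i, ∑ j ∈ univ.filter (fun j => i < j), p i j)
      = (∑ i, ∑ j, if i < j then p i j else 0)
        + (∑ i, ∑ j, if j < i then p i j else 0) := by
        rw [two_mul]
        congr 1
        · exact Finset.sum_congr rfl fun i _ => (Finset.sum_filter _ _)
        · rw [Finset.sum_comm]
          refine Finset.sum_congr rfl fun i _ => ?_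
          · refine (Finset.sum_filter _ _).trans (Finset.sum_congr rfl fun j _ => ?_)
            rw [hpsym]
    _ = ∑ i, ∑ j, p i j := by
        rw [← Finset.sum_add_distrib]
        refine Finset.sum_congr rfl fun i _ => ?_
        rw [← Finset.sum_add_distrib]
        exact Finset.sum_congr rfl fun j _ => (key i j).symm

end Comb



section Helpers
variable {n : ℕ}

lemma split6 (i j k : Fin n) (v : ℝ) (hij : i = j → v = 0) (hik : i = k → v = 0) :
    (if j ≠ k then v else 0) =
      ((if i < j ∧ j < k then v else 0) + (if i < k ∧ k < j then v else 0)
      + (if j < i ∧ i < k then v else 0) + (if k < i ∧ i < j then v else 0)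
      + (if j < k ∧ k < i then v else 0) + (if k < j ∧ j < i then v else 0)) := by
  split_ifs <;>
    first
      | omega
      | ring1
      | (rcases (show i = j ∨ i = k by omega) with h | h <;> simp [hij, hik, h])
end Helpers

section Comb
variable {n : ℕ} (p : Fin n → Fin n → ℝ)

lemma nested_to_flat (g : Fin n → Fin n → Fin n → ℝ) :
    (∑ i, ∑ j ∈ univ.filter (fun j => i < j), ∑ k ∈ univ.filter (fun k => j < k), g i j k)
    = ∑ i, ∑ j, ∑ k, if i < j ∧ j < k then g i j k else 0 := by
  refine Finset.sum_congr rfl fun i _ => ?_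
  rw [Finset.sum_filter]
  refine Finset.sum_congr rfl fun j _ => ?_
  rw [Finset.sum_filter]
  by_cases h : i < j <;> simp [h]

lemma comb_wedge (hpsym : ∀ i j, p i j = p j i) (hpdiag : ∀ i, p i i = 0) :
    2 * (∑ i, ∑ j ∈ univ.filter (fun j => i < j), ∑ k ∈ univ.filter (fun k => j < k),
        (p i j * p i k + p i j * p j k + p i k * p j k))
    = (∑ i, (∑ j, p i j) ^ 2) - ∑ i, ∑ j, (p i j) ^ 2 := by
  -- RHS as a flat off-diagonal sum
  have hRflat : (∑ i, (∑ j, p i j) ^ 2)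
      = ∑ i, ∑ j, ∑ k, p i j * p i k := by
    refine Finset.sum_congr rfl fun i _ => ?_
    rw [sq, Finset.sum_mul_sum]
  have hdiag : ∀ i j : Fin n, (∑ k, if k = j then p i j * p i k else 0) = (p i j) ^ 2 := by
    intro i j
    rw [Finset.sum_ite_eq' univ j (fun k => p i j * p i k)]
    simp [sq]
  have hsplit : (∑ i, ∑ j, ∑ k, p i j * p i k)
      = (∑ i, ∑ j, ∑ k, if j ≠ k then p i j * p i k else 0) + ∑ i, ∑ j, (p i j) ^ 2 := by
    rw [← Finset.sum_add_distrib]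
    refine Finset.sum_congr rfl fun i _ => ?_
    rw [← Finset.sum_add_distrib]
    refine Finset.sum_congr rfl fun j _ => ?_
    rw [← hdiag i j, ← Finset.sum_add_distrib]
    refine Finset.sum_congr rfl fun k _ => ?_
    rcases eq_or_ne j k with h | h
    · simp [h]
    · simp [h, Ne.symm h]
  -- six-region split of the off-diagonal sum
  have hregions : (∑ i, ∑ j, ∑ k, if j ≠ k then p i j * p i k else 0)
      = 2 * ∑ i, ∑ j, ∑ k, if i < j ∧ j < k then
          (p i j * p i k + p i j * p j k + p i k * p j k) else 0 := by
    have step : (∑ i, ∑ j, ∑ k, if j ≠ k then p i j * p i k else 0)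
        = (∑ i, ∑ j, ∑ k, if i < j ∧ j < k then p i j * p i k else 0)
        + (∑ i, ∑ j, ∑ k, if i < k ∧ k < j then p i j * p i k else 0)
        + (∑ i, ∑ j, ∑ k, if j < i ∧ i < k then p i j * p i k else 0)
        + (∑ i, ∑ j, ∑ k, if k < i ∧ i < j then p i j * p i k else 0)
        + (∑ i, ∑ j, ∑ k, if j < k ∧ k < i then p i j * p i k else 0)
        + (∑ i, ∑ j, ∑ k, if k < j ∧ j < i then p i j * p i k else 0) := by
      simp only [← Finset.sum_add_distrib]
      refine Finset.sum_congr rfl fun i _ => Finset.sum_congr rfl fun j _ =>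
        Finset.sum_congr rfl fun k _ => ?_
      exact split6 i j k _ (fun h => by simp [h, hpdiag, hpsym j i]) (fun h => by simp [h, hpdiag])
    -- region 2 = region 1 (as C1)
    have h2 : (∑ i, ∑ j, ∑ k, if i < k ∧ k < j then p i j * p i k else 0)
        = ∑ i, ∑ j, ∑ k, if i < j ∧ j < k then p i j * p i k else 0 := by
      rw [sum3_swap23 (fun i j k => if i < k ∧ k < j then p i j * p i k else 0)]
      refine Finset.sum_congr rfl fun i _ => Finset.sum_congr rfl fun a _ =>
        Finset.sum_congr rfl fun b _ => ?_
      by_cases h : i < a ∧ a < b <;> simp [h, mul_comm]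
    have h3 : (∑ i, ∑ j, ∑ k, if j < i ∧ i < k then p i j * p i k else 0)
        = ∑ i, ∑ j, ∑ k, if i < j ∧ j < k then p i j * p j k else 0 := by
      rw [sum3_swap12 (fun i j k => if j < i ∧ i < k then p i j * p i k else 0)]
      refine Finset.sum_congr rfl fun a _ => Finset.sum_congr rfl fun b _ =>
        Finset.sum_congr rfl fun c _ => ?_
      by_cases h : a < b ∧ b < c <;> simp [h, hpsym b a]
    have h4 : (∑ i, ∑ j, ∑ k, if k < i ∧ i < j then p i j * p i k else 0)
        = ∑ i, ∑ j, ∑ k, if i < j ∧ j < k then p i j * p j k else 0 := by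
      rw [sum3_rot' (fun i j k => if k < i ∧ i < j then p i j * p i k else 0)]
      refine Finset.sum_congr rfl fun a _ => Finset.sum_congr rfl fun b _ =>
        Finset.sum_congr rfl fun c _ => ?_
      by_cases h : a < b ∧ b < c <;> simp [h, hpsym b a, mul_comm]
    have h5 : (∑ i, ∑ j, ∑ k, if j < k ∧ k < i then p i j * p i k else 0)
        = ∑ i, ∑ j, ∑ k, if i < j ∧ j < k then p i k * p j k else 0 := by
      rw [sum3_rot (fun i j k => if j < k ∧ k < i then p i j * p i k else 0)]
      refine Finset.sum_congr rfl fun a _ => Finset.sum_congr rfl fun b _ =>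
        Finset.sum_congr rfl fun c _ => ?_
      by_cases h : a < b ∧ b < c <;> simp [h, hpsym c a, hpsym c b]
    have h6 : (∑ i, ∑ j, ∑ k, if k < j ∧ j < i then p i j * p i k else 0)
        = ∑ i, ∑ j, ∑ k, if i < j ∧ j < k then p i k * p j k else 0 := by
      have e1 := sum3_rot' (fun i j k => if k < j ∧ j < i then p i j * p i k else 0)
      rw [e1]
      rw [show (∑ k, ∑ i, ∑ j, if k < j ∧ j < i then p i j * p i k else 0)
          = ∑ k, ∑ j, ∑ i, if k < j ∧ j < i then p i j * p i k else 0 from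
        Finset.sum_congr rfl fun _ _ => Finset.sum_comm]
      refine Finset.sum_congr rfl fun a _ => Finset.sum_congr rfl fun b _ =>
        Finset.sum_congr rfl fun c _ => ?_
      by_cases h : a < b ∧ b < c <;> simp [h, hpsym c b, hpsym c a, mul_comm]
    rw [step, h2, h3, h4, h5, h6]
    simp only [← Finset.sum_add_distrib]
    rw [two_mul, ← Finset.sum_add_distrib]
    simp only [← Finset.sum_add_distrib]
    refine (Finset.sum_congr rfl fun i _ => Finset.sum_congr rfl fun j _ =>
      Finset.sum_congr rfl fun k _ => ?_).symm
    by_cases h : i < j ∧ j < k <;> simp [h] <;> ring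
  rw [nested_to_flat, hRflat, hsplit, hregions]
  ring


-- ===== helpers for the quadruple identity =====

lemma sum4_swap23 (f : Fin n → Fin n → Fin n → Fin n → ℝ) :
    ∑ i, ∑ j, ∑ k, ∑ l, f i j k l = ∑ i, ∑ k, ∑ j, ∑ l, f i j k l :=
  Finset.sum_congr rfl fun _ _ => Finset.sum_comm

lemma sum4_swap34 (f : Fin n → Fin n → Fin n → Fin n → ℝ) :
    ∑ i, ∑ j, ∑ k, ∑ l, f i j k l = ∑ i, ∑ j, ∑ l, ∑ k, f i j k l :=
  Finset.sum_congr rfl fun _ _ => Finset.sum_congr rfl fun _ _ => Finset.sum_comm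

lemma sum4_pairswap (f : Fin n → Fin n → Fin n → Fin n → ℝ) :
    ∑ i, ∑ j, ∑ k, ∑ l, f i j k l = ∑ k, ∑ l, ∑ i, ∑ j, f i j k l := by
  rw [sum4_swap23, show (∑ i, ∑ k, ∑ j, ∑ l, f i j k l) = ∑ k, ∑ i, ∑ j, ∑ l, f i j k l from
    Finset.sum_comm]
  exact Finset.sum_congr rfl fun k _ => sum3_rot' (fun i j l => f i j k l)

lemma sum4_jkl_rot (f : Fin n → Fin n → Fin n → Fin n → ℝ) :
    ∑ i, ∑ j, ∑ k, ∑ l, f i j k l = ∑ i, ∑ k, ∑ l, ∑ j, f i j k l :=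
  Finset.sum_congr rfl fun i _ => sum3_rot (fun j k l => f i j k l)

lemma sum_single_pt (a : Fin n) (g : Fin n → ℝ) :
    (∑ k, if k = a then g k else 0) = g a := Fintype.sum_ite_eq' a g

lemma sum_pair_pt (a b : Fin n) (g : Fin n → Fin n → ℝ) :
    (∑ k, ∑ l, if k = a ∧ l = b then g k l else 0) = g a b := by
  have h : ∀ k, (∑ l, if k = a ∧ l = b then g k l else 0)
      = if k = a then g k b else 0 := by
    intro k
    by_cases h : k = a
    · subst h; simp [Fintype.sum_ite_eq']
    · simp [h]
  rw [Finset.sum_congr rfl fun k _ => h k, sum_single_pt]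

lemma split_or_left {A B C : Prop} [Decidable A] [Decidable B] [Decidable C] (v : ℝ)
    (h : A → B → v = 0) :
    (if (A ∨ B) ∧ C then v else 0) = (if A ∧ C then v else 0) + (if B ∧ C then v else 0) := by
  by_cases hA : A
  · by_cases hB : B
    · simp [hA, hB, h hA hB]
    · by_cases hC : C <;> simp [hA, hB, hC]
  · by_cases hC : C <;> simp [hA, hC]

lemma part4_pt {A B : Prop} [Decidable A] [Decidable B] (v : ℝ) :
    v = (if ¬A ∧ ¬B then v else 0) + (if A ∧ ¬B then v else 0)
      + (if ¬A ∧ B then v else 0) + (if A ∧ B then v else 0) := by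
  by_cases hA : A <;> by_cases hB : B <;> simp [hA, hB]

-- flat off-diagonal wedge sum, version with condition (k ≠ j)
lemma offdiag_wedge (p : Fin n → Fin n → ℝ) :
    (∑ i, ∑ j, ∑ k, if k ≠ j then p i j * p i k else 0)
    = (∑ i, (∑ j, p i j) ^ 2) - ∑ i, ∑ j, (p i j) ^ 2 := by
  have hRflat : (∑ i, (∑ j, p i j) ^ 2) = ∑ i, ∑ j, ∑ k, p i j * p i k := by
    refine Finset.sum_congr rfl fun i _ => ?_
    rw [sq, Finset.sum_mul_sum]
  have hdiag : ∀ i j : Fin n, (∑ k, if k = j then p i j * p i k else 0) = (p i j) ^ 2 := by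
    intro i j
    rw [sum_single_pt j (fun k => p i j * p i k), sq]
  have hsplit : (∑ i, ∑ j, ∑ k, p i j * p i k)
      = (∑ i, ∑ j, ∑ k, if k ≠ j then p i j * p i k else 0) + ∑ i, ∑ j, (p i j) ^ 2 := by
    rw [← Finset.sum_add_distrib]
    refine Finset.sum_congr rfl fun i _ => ?_
    rw [← Finset.sum_add_distrib]
    refine Finset.sum_congr rfl fun j _ => ?_
    rw [← hdiag i j, ← Finset.sum_add_distrib]
    refine Finset.sum_congr rfl fun k _ => ?_
    rcases eq_or_ne k j with h | h
    · simp [h]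
    · simp [h]
  rw [hRflat, hsplit]; ring

-- flat wedge sum with double exclusion
lemma wedge_flat_aux (p : Fin n → Fin n → ℝ) (hpdiag : ∀ i, p i i = 0) :
    (∑ i, ∑ j, ∑ l, if l ≠ i ∧ l ≠ j then p i j * p i l else 0)
    = (∑ i, (∑ j, p i j) ^ 2) - ∑ i, ∑ j, (p i j) ^ 2 := by
  rw [← offdiag_wedge p]
  refine Finset.sum_congr rfl fun i _ => Finset.sum_congr rfl fun j _ =>
    Finset.sum_congr rfl fun l _ => ?_
  have hv : l = i → p i j * p i l = 0 := fun h => by rw [h]; simp [hpdiag]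
  split_ifs <;> first | rfl | omega | (rw [hv (by omega)]) | (rw [(hv (by omega)).symm])


lemma sum3_congr (F G : Fin n → Fin n → Fin n → ℝ) (h : ∀ i j k, F i j k = G i j k) :
    ∑ i, ∑ j, ∑ k, F i j k = ∑ i, ∑ j, ∑ k, G i j k :=
  Finset.sum_congr rfl fun i _ => Finset.sum_congr rfl fun j _ =>
    Finset.sum_congr rfl fun k _ => h i j k

lemma sum4_congr (F G : Fin n → Fin n → Fin n → Fin n → ℝ)
    (h : ∀ i j k l, F i j k l = G i j k l) :
    ∑ i, ∑ j, ∑ k, ∑ l, F i j k l = ∑ i, ∑ j, ∑ k, ∑ l, G i j k l :=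
  Finset.sum_congr rfl fun i _ => Finset.sum_congr rfl fun j _ =>
    Finset.sum_congr rfl fun k _ => Finset.sum_congr rfl fun l _ => h i j k l

lemma collapse_k (i : Fin n) (C : Fin n → Prop) [∀ l, Decidable (C l)]
    (w : Fin n → Fin n → ℝ) :
    (∑ k, ∑ l, if k = i ∧ C l then w k l else 0) = ∑ l, if C l then w i l else 0 := by
  have h : ∀ k, (∑ l, if k = i ∧ C l then w k l else 0)
      = if k = i then (∑ l, if C l then w k l else 0) else 0 := by
    intro k; by_cases hk : k = i <;> simp [hk]
  rw [Finset.sum_congr rfl fun k _ => h k, sum_single_pt]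

lemma collapse_l (a : Fin n) (C : Prop) [Decidable C] (w : Fin n → ℝ) :
    (∑ l, if l = a ∧ C then w l else 0) = if C then w a else 0 := by
  by_cases hC : C <;> simp [hC, Fintype.sum_ite_eq']

lemma comb_quad_flat (p : Fin n → Fin n → ℝ)
    (hpsym : ∀ i j, p i j = p j i) (hpdiag : ∀ i, p i i = 0) :
    (∑ i, ∑ j, ∑ k, ∑ l, if ¬(k = i ∨ k = j) ∧ ¬(l = i ∨ l = j) then p i j * p k l else 0)
    = (∑ i, ∑ j, p i j) ^ 2 + 2 * (∑ i, ∑ j, (p i j) ^ 2)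
      - 4 * (∑ i, (∑ j, p i j) ^ 2) := by
  have hvij : ∀ i j k l : Fin n, i = j → p i j * p k l = 0 := by
    intro i j k l h; rw [h, hpdiag]; ring
  -- P1^2 as a full flat 4-sum
  have hP1sq : (∑ i, ∑ j, p i j) ^ 2 = ∑ i, ∑ j, ∑ k, ∑ l, p i j * p k l := by
    calc (∑ i, ∑ j, p i j) ^ 2
        = ∑ i, ∑ k, (∑ j, p i j) * (∑ l, p k l) := by rw [sq, Finset.sum_mul_sum]
      _ = ∑ i, ∑ k, ∑ j, ∑ l, p i j * p k l := by
          refine Finset.sum_congr rfl fun i _ => Finset.sum_congr rfl fun k _ => ?_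
          rw [Finset.sum_mul_sum]
      _ = ∑ i, ∑ j, ∑ k, ∑ l, p i j * p k l :=
          (sum4_swap23 (fun i j k l => p i j * p k l)).symm
  -- partition of the full sum into four groups
  have hpart : (∑ i, ∑ j, ∑ k, ∑ l, p i j * p k l)
      = (∑ i, ∑ j, ∑ k, ∑ l, if ¬(k = i ∨ k = j) ∧ ¬(l = i ∨ l = j) then p i j * p k l else 0)
      + (∑ i, ∑ j, ∑ k, ∑ l, if (k = i ∨ k = j) ∧ ¬(l = i ∨ l = j) then p i j * p k l else 0)
      + (∑ i, ∑ j, ∑ k, ∑ l, if ¬(k = i ∨ k = j) ∧ (l = i ∨ l = j) then p i j * p k l else 0)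
      + (∑ i, ∑ j, ∑ k, ∑ l, if (k = i ∨ k = j) ∧ (l = i ∨ l = j) then p i j * p k l else 0) := by
    rw [sum4_congr (fun i j k l => p i j * p k l)
      (fun i j k l =>
        (if ¬(k = i ∨ k = j) ∧ ¬(l = i ∨ l = j) then p i j * p k l else 0)
        + (if (k = i ∨ k = j) ∧ ¬(l = i ∨ l = j) then p i j * p k l else 0)
        + (if ¬(k = i ∨ k = j) ∧ (l = i ∨ l = j) then p i j * p k l else 0)
        + (if (k = i ∨ k = j) ∧ (l = i ∨ l = j) then p i j * p k l else 0))
      (fun i j k l => part4_pt _)]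
    simp only [Finset.sum_add_distrib]
  -- Group 2 : k ∈ {i,j}, l ∉ {i,j}
  have hT2 : (∑ i, ∑ j, ∑ k, ∑ l, if (k = i ∨ k = j) ∧ ¬(l = i ∨ l = j) then p i j * p k l else 0)
      = 2 * ((∑ i, (∑ j, p i j) ^ 2) - ∑ i, ∑ j, (p i j) ^ 2) := by
    rw [sum4_congr _
      (fun i j k l => (if k = i ∧ ¬(l = i ∨ l = j) then p i j * p k l else 0)
        + (if k = j ∧ ¬(l = i ∨ l = j) then p i j * p k l else 0))
      (fun i j k l => split_or_left _ (fun h1 h2 => hvij i j k l (h1.symm.trans h2)))]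
    simp only [Finset.sum_add_distrib]
    have e1 : (∑ i, ∑ j, ∑ k, ∑ l, if k = i ∧ ¬(l = i ∨ l = j) then p i j * p k l else 0)
        = (∑ i, (∑ j, p i j) ^ 2) - ∑ i, ∑ j, (p i j) ^ 2 := by
      rw [← wedge_flat_aux p hpdiag]
      refine Finset.sum_congr rfl fun i _ => Finset.sum_congr rfl fun j _ => ?_
      rw [collapse_k i (fun l => ¬(l = i ∨ l = j)) (fun k l => p i j * p k l)]
      refine Finset.sum_congr rfl fun l _ => ?_
      refine if_congr (by tauto) rfl rfl
    have e2 : (∑ i, ∑ j, ∑ k, ∑ l, if k = j ∧ ¬(l = i ∨ l = j) then p i j * p k l else 0)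
        = (∑ i, (∑ j, p i j) ^ 2) - ∑ i, ∑ j, (p i j) ^ 2 := by
      rw [← wedge_flat_aux p hpdiag]
      have step : ∀ i j : Fin n, (∑ k, ∑ l, if k = j ∧ ¬(l = i ∨ l = j) then p i j * p k l else 0)
          = ∑ l, if ¬(l = i ∨ l = j) then p i j * p j l else 0 :=
        fun i j => collapse_k j (fun l => ¬(l = i ∨ l = j)) (fun k l => p i j * p k l)
      rw [Finset.sum_congr rfl fun i _ => Finset.sum_congr rfl fun j _ => step i j]
      -- swap i and j
      rw [sum3_swap12 (fun i j l => if ¬(l = i ∨ l = j) then p i j * p j l else 0)]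
      refine Finset.sum_congr rfl fun a _ => Finset.sum_congr rfl fun b _ =>
        Finset.sum_congr rfl fun c _ => ?_
      by_cases h1 : c = a <;> by_cases h2 : c = b <;>
        simp [h1, h2, hpsym b a]
    rw [e1, e2]; ring
  -- Group 3 : k ∉ {i,j}, l ∈ {i,j}
  have hT3 : (∑ i, ∑ j, ∑ k, ∑ l, if ¬(k = i ∨ k = j) ∧ (l = i ∨ l = j) then p i j * p k l else 0)
      = 2 * ((∑ i, (∑ j, p i j) ^ 2) - ∑ i, ∑ j, (p i j) ^ 2) := by
    rw [sum4_congr _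
      (fun i j k l => (if l = i ∧ ¬(k = i ∨ k = j) then p i j * p k l else 0)
        + (if l = j ∧ ¬(k = i ∨ k = j) then p i j * p k l else 0))
      (fun i j k l => (if_congr and_comm rfl rfl).trans
        (split_or_left _ (fun h1 h2 => hvij i j k l (h1.symm.trans h2))))]
    simp only [Finset.sum_add_distrib]
    have e1 : (∑ i, ∑ j, ∑ k, ∑ l, if l = i ∧ ¬(k = i ∨ k = j) then p i j * p k l else 0)
        = (∑ i, (∑ j, p i j) ^ 2) - ∑ i, ∑ j, (p i j) ^ 2 := by
      rw [← wedge_flat_aux p hpdiag]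
      refine Finset.sum_congr rfl fun i _ => Finset.sum_congr rfl fun j _ => ?_
      rw [Finset.sum_congr rfl fun k (_ : k ∈ univ) =>
        collapse_l i (¬(k = i ∨ k = j)) (fun l => p i j * p k l)]
      refine Finset.sum_congr rfl fun k _ => ?_
      by_cases h1 : k = i <;> by_cases h2 : k = j <;> simp [h1, h2, hpsym k i]
    have e2 : (∑ i, ∑ j, ∑ k, ∑ l, if l = j ∧ ¬(k = i ∨ k = j) then p i j * p k l else 0)
        = (∑ i, (∑ j, p i j) ^ 2) - ∑ i, ∑ j, (p i j) ^ 2 := by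
      rw [← wedge_flat_aux p hpdiag]
      have step : ∀ i j : Fin n, (∑ k, ∑ l, if l = j ∧ ¬(k = i ∨ k = j) then p i j * p k l else 0)
          = ∑ k, if ¬(k = i ∨ k = j) then p i j * p k j else 0 :=
        fun i j => Finset.sum_congr rfl fun k _ =>
          collapse_l j (¬(k = i ∨ k = j)) (fun l => p i j * p k l)
      rw [Finset.sum_congr rfl fun i _ => Finset.sum_congr rfl fun j _ => step i j]
      rw [sum3_swap12 (fun i j k => if ¬(k = i ∨ k = j) then p i j * p k j else 0)]
      refine Finset.sum_congr rfl fun a _ => Finset.sum_congr rfl fun b _ =>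
        Finset.sum_congr rfl fun c _ => ?_
      by_cases h1 : c = a <;> by_cases h2 : c = b <;>
        simp [h1, h2, hpsym b a, hpsym c a]
    rw [e1, e2]; ring
  -- Group 4 : k ∈ {i,j}, l ∈ {i,j}
  have hT4 : (∑ i, ∑ j, ∑ k, ∑ l, if (k = i ∨ k = j) ∧ (l = i ∨ l = j) then p i j * p k l else 0)
      = 2 * (∑ i, ∑ j, (p i j) ^ 2) := by
    have pt : ∀ i j k l : Fin n,
        (if (k = i ∨ k = j) ∧ (l = i ∨ l = j) then p i j * p k l else 0)
        = (if k = i ∧ l = i then p i j * p k l else 0) + (if k = i ∧ l = j then p i j * p k l else 0)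
        + (if k = j ∧ l = i then p i j * p k l else 0) + (if k = j ∧ l = j then p i j * p k l else 0) := by
      intro i j k l
      by_cases h1 : k = i <;> by_cases h2 : k = j <;> by_cases h3 : l = i <;> by_cases h4 : l = j <;>
        first
          | (have hij : i = j := by omega
             subst hij
             simp [h1, h2, h3, h4, hpdiag])
          | (have hij : ¬ i = j := by omega
             have hji : ¬ j = i := by omega
             simp [h1, h2, h3, h4, hij, hji, hpdiag])
          | simp [h1, h2, h3, h4]
    rw [sum4_congr _ _ pt]
    simp only [Finset.sum_add_distrib]
    have c1 : (∑ i, ∑ j, ∑ k, ∑ l, if k = i ∧ l = i then p i j * p k l else 0) = 0 := by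
      refine Finset.sum_eq_zero fun i _ => Finset.sum_eq_zero fun j _ => ?_
      rw [sum_pair_pt i i (fun k l => p i j * p k l)]
      simp [hpdiag]
    have c2 : (∑ i, ∑ j, ∑ k, ∑ l, if k = i ∧ l = j then p i j * p k l else 0)
        = ∑ i, ∑ j, (p i j) ^ 2 := by
      refine Finset.sum_congr rfl fun i _ => Finset.sum_congr rfl fun j _ => ?_
      rw [sum_pair_pt i j (fun k l => p i j * p k l), sq]
    have c3 : (∑ i, ∑ j, ∑ k, ∑ l, if k = j ∧ l = i then p i j * p k l else 0)
        = ∑ i, ∑ j, (p i j) ^ 2 := by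
      refine Finset.sum_congr rfl fun i _ => Finset.sum_congr rfl fun j _ => ?_
      rw [sum_pair_pt j i (fun k l => p i j * p k l), hpsym j i, sq]
    have c4 : (∑ i, ∑ j, ∑ k, ∑ l, if k = j ∧ l = j then p i j * p k l else 0) = 0 := by
      refine Finset.sum_eq_zero fun i _ => Finset.sum_eq_zero fun j _ => ?_
      rw [sum_pair_pt j j (fun k l => p i j * p k l)]
      simp [hpdiag]
    rw [c1, c2, c3, c4]; ring
  linarith [hpart, hP1sq, hT2, hT3, hT4]


lemma nested_to_flat2 (a : Fin n) (g : Fin n → Fin n → ℝ) :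
    (∑ k ∈ univ.filter (fun k => a < k), ∑ l ∈ univ.filter (fun l => k < l), g k l)
    = ∑ k, ∑ l, if a < k ∧ k < l then g k l else 0 := by
  rw [Finset.sum_filter]
  refine Finset.sum_congr rfl fun k _ => ?_
  by_cases h : a < k <;> simp [h, Finset.sum_filter]

lemma nested_to_flat4 (g : Fin n → Fin n → Fin n → Fin n → ℝ) :
    (∑ i, ∑ j ∈ univ.filter (fun j => i < j), ∑ k ∈ univ.filter (fun k => j < k),
      ∑ l ∈ univ.filter (fun l => k < l), g i j k l)
    = ∑ i, ∑ j, ∑ k, ∑ l, if i < j ∧ j < k ∧ k < l then g i j k l else 0 := by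
  refine Finset.sum_congr rfl fun i _ => ?_
  rw [Finset.sum_filter]
  refine Finset.sum_congr rfl fun j _ => ?_
  by_cases h : i < j <;> simp [h, nested_to_flat2 j (fun k l => g i j k l)]

lemma comb_quad (p : Fin n → Fin n → ℝ)
    (hpsym : ∀ i j, p i j = p j i) (hpdiag : ∀ i, p i i = 0) :
    8 * (∑ i, ∑ j ∈ univ.filter (fun j => i < j), ∑ k ∈ univ.filter (fun k => j < k),
        ∑ l ∈ univ.filter (fun l => k < l),
        (p i j * p k l + p i k * p j l + p i l * p j k))
    = (∑ i, ∑ j, p i j) ^ 2 + 2 * (∑ i, ∑ j, (p i j) ^ 2)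
      - 4 * (∑ i, (∑ j, p i j) ^ 2) := by
  have hvij : ∀ i j k l : Fin n, i = j → p i j * p k l = 0 := by
    intro i j k l h; rw [h, hpdiag]; ring
  have hvkl : ∀ i j k l : Fin n, k = l → p i j * p k l = 0 := by
    intro i j k l h; rw [h, hpdiag]; ring
  rw [← comb_quad_flat p hpsym hpdiag, nested_to_flat4]
  -- Step 1 : split on i<j vs j<i
  have step1 : (∑ i, ∑ j, ∑ k, ∑ l,
        if ¬(k = i ∨ k = j) ∧ ¬(l = i ∨ l = j) then p i j * p k l else 0)
      = 2 * ∑ i, ∑ j, ∑ k, ∑ l,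
        if (¬(k = i ∨ k = j) ∧ ¬(l = i ∨ l = j)) ∧ i < j then p i j * p k l else 0 := by
    rw [sum4_congr _
      (fun i j k l =>
        (if (¬(k = i ∨ k = j) ∧ ¬(l = i ∨ l = j)) ∧ i < j then p i j * p k l else 0)
        + (if (¬(k = i ∨ k = j) ∧ ¬(l = i ∨ l = j)) ∧ j < i then p i j * p k l else 0))
      (fun i j k l => by
        have hv := hvij i j k l
        beta_reduce
        split_ifs <;> first | omega | ring1 | (rw [hv (by omega)]; ring))]
    simp only [Finset.sum_add_distrib]
    have swap : (∑ i, ∑ j, ∑ k, ∑ l,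
          if (¬(k = i ∨ k = j) ∧ ¬(l = i ∨ l = j)) ∧ j < i then p i j * p k l else 0)
        = ∑ i, ∑ j, ∑ k, ∑ l,
          if (¬(k = i ∨ k = j) ∧ ¬(l = i ∨ l = j)) ∧ i < j then p i j * p k l else 0 := by
      rw [show (∑ i, ∑ j, ∑ k, ∑ l,
          if (¬(k = i ∨ k = j) ∧ ¬(l = i ∨ l = j)) ∧ j < i then p i j * p k l else 0)
        = ∑ j, ∑ i, ∑ k, ∑ l,
          if (¬(k = i ∨ k = j) ∧ ¬(l = i ∨ l = j)) ∧ j < i then p i j * p k l else 0 from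
        Finset.sum_comm]
      refine sum4_congr _ _ fun a b k l => ?_
      exact (if_congr (by tauto) (by rw [hpsym b a]) rfl)
    rw [swap]; ring
  -- Step 2 : split on k<l vs l<k
  have step2 : (∑ i, ∑ j, ∑ k, ∑ l,
        if (¬(k = i ∨ k = j) ∧ ¬(l = i ∨ l = j)) ∧ i < j then p i j * p k l else 0)
      = 2 * ∑ i, ∑ j, ∑ k, ∑ l,
        if (¬(k = i ∨ k = j) ∧ ¬(l = i ∨ l = j)) ∧ i < j ∧ k < l then p i j * p k l else 0 := by
    rw [sum4_congr _
      (fun i j k l =>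
        (if (¬(k = i ∨ k = j) ∧ ¬(l = i ∨ l = j)) ∧ i < j ∧ k < l then p i j * p k l else 0)
        + (if (¬(k = i ∨ k = j) ∧ ¬(l = i ∨ l = j)) ∧ i < j ∧ l < k then p i j * p k l else 0))
      (fun i j k l => by
        have hv := hvkl i j k l
        beta_reduce
        split_ifs <;> first | omega | ring1 | (rw [hv (by omega)]; ring))]
    simp only [Finset.sum_add_distrib]
    have swap : (∑ i, ∑ j, ∑ k, ∑ l,
          if (¬(k = i ∨ k = j) ∧ ¬(l = i ∨ l = j)) ∧ i < j ∧ l < k then p i j * p k l else 0)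
        = ∑ i, ∑ j, ∑ k, ∑ l,
          if (¬(k = i ∨ k = j) ∧ ¬(l = i ∨ l = j)) ∧ i < j ∧ k < l then p i j * p k l else 0 := by
      rw [sum4_swap34 (fun i j k l =>
        if (¬(k = i ∨ k = j) ∧ ¬(l = i ∨ l = j)) ∧ i < j ∧ l < k then p i j * p k l else 0)]
      refine sum4_congr _ _ fun i j a b => ?_
      exact (if_congr (by tauto) (by rw [hpsym b a]) rfl)
    rw [swap]; ring
  -- Step 3 : split on i<k vs k<i
  have step3 : (∑ i, ∑ j, ∑ k, ∑ l,
        if (¬(k = i ∨ k = j) ∧ ¬(l = i ∨ l = j)) ∧ i < j ∧ k < l then p i j * p k l else 0)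
      = 2 * ∑ i, ∑ j, ∑ k, ∑ l,
        if (¬(k = i ∨ k = j) ∧ ¬(l = i ∨ l = j)) ∧ i < j ∧ k < l ∧ i < k then
          p i j * p k l else 0 := by
    rw [sum4_congr _
      (fun i j k l =>
        (if (¬(k = i ∨ k = j) ∧ ¬(l = i ∨ l = j)) ∧ i < j ∧ k < l ∧ i < k then
          p i j * p k l else 0)
        + (if (¬(k = i ∨ k = j) ∧ ¬(l = i ∨ l = j)) ∧ i < j ∧ k < l ∧ k < i then
          p i j * p k l else 0))
      (fun i j k l => by beta_reduce; split_ifs <;> first | omega | ring1)]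
    simp only [Finset.sum_add_distrib]
    have swap : (∑ i, ∑ j, ∑ k, ∑ l,
          if (¬(k = i ∨ k = j) ∧ ¬(l = i ∨ l = j)) ∧ i < j ∧ k < l ∧ k < i then
            p i j * p k l else 0)
        = ∑ i, ∑ j, ∑ k, ∑ l,
          if (¬(k = i ∨ k = j) ∧ ¬(l = i ∨ l = j)) ∧ i < j ∧ k < l ∧ i < k then
            p i j * p k l else 0 := by
      rw [sum4_pairswap (fun i j k l =>
        if (¬(k = i ∨ k = j) ∧ ¬(l = i ∨ l = j)) ∧ i < j ∧ k < l ∧ k < i then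
          p i j * p k l else 0)]
      refine sum4_congr _ _ fun a b c d => ?_
      exact (if_congr (by tauto) (mul_comm _ _) rfl)
    rw [swap]; ring
  -- Step 4 : split by the position of j
  have step4 : (∑ i, ∑ j, ∑ k, ∑ l,
        if (¬(k = i ∨ k = j) ∧ ¬(l = i ∨ l = j)) ∧ i < j ∧ k < l ∧ i < k then
          p i j * p k l else 0)
      = (∑ i, ∑ j, ∑ k, ∑ l, if i < j ∧ j < k ∧ k < l then p i j * p k l else 0)
      + (∑ i, ∑ j, ∑ k, ∑ l, if i < k ∧ k < j ∧ j < l then p i j * p k l else 0)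
      + (∑ i, ∑ j, ∑ k, ∑ l, if i < k ∧ k < l ∧ l < j then p i j * p k l else 0) := by
    rw [sum4_congr _
      (fun i j k l =>
        (if i < j ∧ j < k ∧ k < l then p i j * p k l else 0)
        + (if i < k ∧ k < j ∧ j < l then p i j * p k l else 0)
        + (if i < k ∧ k < l ∧ l < j then p i j * p k l else 0))
      (fun i j k l => by beta_reduce; split_ifs <;> first | omega | ring1)]
    simp only [Finset.sum_add_distrib]
  -- identify the three pieces with the three pairings over sorted quadruples
  have e2 : (∑ i, ∑ j, ∑ k, ∑ l, if i < k ∧ k < j ∧ j < l then p i j * p k l else 0)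
      = ∑ i, ∑ j, ∑ k, ∑ l, if i < j ∧ j < k ∧ k < l then p i k * p j l else 0 := by
    rw [sum4_swap23 (fun i j k l => if i < k ∧ k < j ∧ j < l then p i j * p k l else 0)]
  have e3 : (∑ i, ∑ j, ∑ k, ∑ l, if i < k ∧ k < l ∧ l < j then p i j * p k l else 0)
      = ∑ i, ∑ j, ∑ k, ∑ l, if i < j ∧ j < k ∧ k < l then p i l * p j k else 0 := by
    rw [sum4_jkl_rot (fun i j k l => if i < k ∧ k < l ∧ l < j then p i j * p k l else 0)]
  have esum : (∑ i, ∑ j, ∑ k, ∑ l, if i < j ∧ j < k ∧ k < l then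
        (p i j * p k l + p i k * p j l + p i l * p j k) else 0)
      = (∑ i, ∑ j, ∑ k, ∑ l, if i < j ∧ j < k ∧ k < l then p i j * p k l else 0)
      + (∑ i, ∑ j, ∑ k, ∑ l, if i < j ∧ j < k ∧ k < l then p i k * p j l else 0)
      + (∑ i, ∑ j, ∑ k, ∑ l, if i < j ∧ j < k ∧ k < l then p i l * p j k else 0) := by
    rw [sum4_congr _
      (fun i j k l =>
        (if i < j ∧ j < k ∧ k < l then p i j * p k l else 0)
        + (if i < j ∧ j < k ∧ k < l then p i k * p j l else 0)
        + (if i < j ∧ j < k ∧ k < l then p i l * p j k else 0))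
      (fun i j k l => by beta_reduce; split_ifs <;> ring1)]
    simp only [Finset.sum_add_distrib]
  rw [esum, ← e2, ← e3, step1, step2, step3, step4]
  ring


lemma flat4_P1sq (p : Fin n → Fin n → ℝ) :
    (∑ i, ∑ j, p i j) ^ 2 = ∑ i, ∑ j, ∑ k, ∑ l, p i j * p k l := by
  calc (∑ i, ∑ j, p i j) ^ 2
      = ∑ i, ∑ k, (∑ j, p i j) * (∑ l, p k l) := by rw [sq, Finset.sum_mul_sum]
    _ = ∑ i, ∑ k, ∑ j, ∑ l, p i j * p k l := by
        refine Finset.sum_congr rfl fun i _ => Finset.sum_congr rfl fun k _ => ?_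
        rw [Finset.sum_mul_sum]
    _ = ∑ i, ∑ j, ∑ k, ∑ l, p i j * p k l :=
        (sum4_swap23 (fun i j k l => p i j * p k l)).symm

lemma filter_ne_ext (a : Fin n) (h : Fin n → ℝ) (ha : h a = 0) :
    (∑ x ∈ univ.filter (fun x => x ≠ a), h x) = ∑ x, h x := by
  rw [Finset.sum_filter]
  refine Finset.sum_congr rfl fun x _ => ?_
  by_cases hx : x = a <;> simp [hx, ha]

lemma avg_var (m : ℕ) (hm : (m : ℝ) ≠ 0) (f : Fin m → ℝ) :
    (1 / (m : ℝ)) * ∑ i, (f i - (1 / (m : ℝ)) * ∑ i', f i') ^ 2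
    = (1 / (m : ℝ)) * (∑ i, (f i) ^ 2) - (1 / (m : ℝ)) ^ 2 * (∑ i, f i) ^ 2 := by
  have e : ∀ i : Fin m, (f i - (1 / (m : ℝ)) * ∑ i', f i') ^ 2
      = (f i) ^ 2 - (2 * (1 / (m : ℝ)) * (∑ i', f i')) * (f i)
        + ((1 / (m : ℝ)) * ∑ i', f i') ^ 2 := fun i => by ring
  rw [Finset.sum_congr rfl fun i _ => e i, Finset.sum_add_distrib, Finset.sum_sub_distrib,
    ← Finset.mul_sum, Finset.sum_const, card_univ, Fintype.card_fin, nsmul_eq_mul]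
  field_simp
  ring

end Comb

open MeasureTheory ProbabilityTheory Finset

/-- Expectation of the degree variance under HER(p). -/
theorem her_degree_variance_expectation
    {Ω : Type*} [MeasurableSpace Ω] (μ : Measure Ω) [IsProbabilityMeasure μ]
    (n : ℕ) (Y : Fin n → Fin n → Ω → ℝ) (p : Fin n → Fin n → ℝ)
    (hYsym : ∀ i j, Y i j = Y j i) (hYdiag : ∀ i, Y i i = 0)
    (hpsym : ∀ i j, p i j = p j i) (hpdiag : ∀ i, p i i = 0)
    (hmeas : ∀ i j, Measurable (Y i j))
    (h01 : ∀ i j ω, Y i j ω = 0 ∨ Y i j ω = 1)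
    (hmean : ∀ i j, i ≠ j → ∫ ω, Y i j ω ∂μ = p i j)
    (hindep : iIndepFun
      (fun e : {e : Fin n × Fin n // e.1 < e.2} => Y e.1.1 e.1.2) μ) :
    ∫ ω, (1 / (n : ℝ)) * ∑ i,
        ((∑ j ∈ univ.filter (fun j => j ≠ i), Y i j ω)
          - (1 / (n : ℝ)) * ∑ i', ∑ j ∈ univ.filter (fun j => j ≠ i'), Y i' j ω) ^ 2 ∂μ
    = (2 * ((n : ℝ) - 2) / (n : ℝ) ^ 2) * (∑ i, ∑ j ∈ univ.filter (fun j => i < j), p i j)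
      + (2 * ((n : ℝ) - 4) / (n : ℝ) ^ 2) *
        (∑ i, ∑ j ∈ univ.filter (fun j => i < j), ∑ k ∈ univ.filter (fun k => j < k),
          (p i j * p i k + p i j * p j k + p i k * p j k))
      - (8 / (n : ℝ) ^ 2) *
        (∑ i, ∑ j ∈ univ.filter (fun j => i < j), ∑ k ∈ univ.filter (fun k => j < k),
          ∑ l ∈ univ.filter (fun l => k < l),
          (p i j * p k l + p i k * p j l + p i l * p j k)) := by
  rcases Nat.eq_zero_or_pos n with hn0 | hnpos
  · subst hn0
    simp
  have hn' : (n : ℝ) ≠ 0 := Nat.cast_ne_zero.mpr hnpos.ne'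
  -- integrability of the edge variables and their products
  have intY : ∀ i j, Integrable (Y i j) μ := by
    intro i j
    refine (integrable_const (1 : ℝ)).mono' (hmeas i j).aestronglyMeasurable
      (Filter.Eventually.of_forall fun ω => ?_)
    rcases h01 i j ω with h | h <;> simp [h]
  have intYY : ∀ i j k l, Integrable (fun ω => Y i j ω * Y k l ω) μ := by
    intro i j k l
    refine (integrable_const (1 : ℝ)).mono' ((hmeas i j).mul (hmeas k l)).aestronglyMeasurable
      (Filter.Eventually.of_forall fun ω => ?_)
    rcases h01 i j ω with h | h <;> rcases h01 k l ω with h' | h' <;> simp [h, h']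
  -- second moments
  have mom_same : ∀ i j, i ≠ j → ∫ ω, Y i j ω * Y i j ω ∂μ = p i j := by
    intro i j hij
    have h : ∀ ω, Y i j ω * Y i j ω = Y i j ω := by
      intro ω; rcases h01 i j ω with h | h <;> simp [h]
    rw [integral_congr_ae (Filter.Eventually.of_forall h), hmean i j hij]
  have base : ∀ a b c d : Fin n, a < b → c < d → ¬(a = c ∧ b = d) →
      ∫ ω, Y a b ω * Y c d ω ∂μ = p a b * p c d := by
    intro a b c d hab hcd hne
    have hsub : (⟨(a, b), hab⟩ : {e : Fin n × Fin n // e.1 < e.2}) ≠ ⟨(c, d), hcd⟩ := by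
      intro h
      have h1 := congrArg (fun e => e.1.1) h
      have h2 := congrArg (fun e => e.1.2) h
      exact hne ⟨h1, h2⟩
    have hind : IndepFun (Y a b) (Y c d) μ := hindep.indepFun hsub
    have heq := hind.integral_mul_eq_mul_integral (intY a b).aestronglyMeasurable (intY c d).aestronglyMeasurable
    have hfun : (Y a b * Y c d) = fun ω => Y a b ω * Y c d ω := rfl
    rw [hfun] at heq
    rw [heq, hmean a b hab.ne, hmean c d hcd.ne]
  have mom : ∀ i j k l : Fin n, i ≠ j → k ≠ l →
      ∫ ω, Y i j ω * Y k l ω ∂μ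
      = if (k = i ∧ l = j) ∨ (k = j ∧ l = i) then p i j else p i j * p k l := by
    intro i j k l hij hkl
    by_cases hc : (k = i ∧ l = j) ∨ (k = j ∧ l = i)
    · rw [if_pos hc]
      rcases hc with ⟨h1, h2⟩ | ⟨h1, h2⟩
      · rw [show (fun ω => Y i j ω * Y k l ω) = fun ω => Y i j ω * Y i j ω from by
          rw [h1, h2]]
        exact mom_same i j hij
      · rw [show (fun ω => Y i j ω * Y k l ω) = fun ω => Y i j ω * Y i j ω from by
          rw [h1, h2, ← hYsym i j]]
        exact mom_same i j hij
    · rw [if_neg hc]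
      rcases lt_or_gt_of_ne hij with h1 | h1 <;> rcases lt_or_gt_of_ne hkl with h2 | h2
      · exact base i j k l h1 h2 (fun ⟨e1, e2⟩ => hc (Or.inl ⟨e1.symm, e2.symm⟩))
      · rw [show (fun ω => Y i j ω * Y k l ω) = fun ω => Y i j ω * Y l k ω from by
          rw [hYsym k l], hpsym k l]
        exact base i j l k h1 h2 (fun ⟨e1, e2⟩ => hc (Or.inr ⟨e2.symm, e1.symm⟩))
      · rw [show (fun ω => Y i j ω * Y k l ω) = fun ω => Y j i ω * Y k l ω from by
          rw [hYsym i j], hpsym i j]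
        exact base j i k l h1 h2 (fun ⟨e1, e2⟩ => hc (Or.inr ⟨e1.symm, e2.symm⟩))
      · rw [show (fun ω => Y i j ω * Y k l ω) = fun ω => Y j i ω * Y l k ω from by
          rw [hYsym i j, hYsym k l], hpsym i j, hpsym k l]
        exact base j i l k h1 h2 (fun ⟨e1, e2⟩ => hc (Or.inl ⟨e2.symm, e1.symm⟩))
  -- rewrite the integrand via the variance identity
  have hcong : (∫ ω, (1 / (n : ℝ)) * ∑ i,
        ((∑ j ∈ univ.filter (fun j => j ≠ i), Y i j ω)
          - (1 / (n : ℝ)) * ∑ i', ∑ j ∈ univ.filter (fun j => j ≠ i'), Y i' j ω) ^ 2 ∂μ)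
      = ∫ ω, ((1 / (n : ℝ)) * (∑ i, (∑ j ∈ univ.filter (fun j => j ≠ i), Y i j ω) ^ 2)
          - (1 / (n : ℝ)) ^ 2 * (∑ i, ∑ j ∈ univ.filter (fun j => j ≠ i), Y i j ω) ^ 2) ∂μ := by
    refine integral_congr_ae (Filter.Eventually.of_forall fun ω => ?_)
    exact avg_var n hn' (fun i => ∑ j ∈ univ.filter (fun j => j ≠ i), Y i j ω)
  have hDexp : ∀ i, (fun ω => (∑ j ∈ univ.filter (fun j => j ≠ i), Y i j ω) ^ 2)
      = fun ω => ∑ j ∈ univ.filter (fun j => j ≠ i), ∑ k ∈ univ.filter (fun k => k ≠ i),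
          Y i j ω * Y i k ω := by
    intro i; funext ω; rw [sq, Finset.sum_mul_sum]
  have intD2 : ∀ i, Integrable (fun ω => (∑ j ∈ univ.filter (fun j => j ≠ i), Y i j ω) ^ 2) μ := by
    intro i; rw [hDexp i]
    exact integrable_finset_sum _ fun j _ => integrable_finset_sum _ fun k _ => intYY i j i k
  have hSexp : (fun ω => (∑ i, ∑ j ∈ univ.filter (fun j => j ≠ i), Y i j ω) ^ 2)
      = fun ω => ∑ i, ∑ k, ∑ j ∈ univ.filter (fun j => j ≠ i),
          ∑ l ∈ univ.filter (fun l => l ≠ k), Y i j ω * Y k l ω := by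
    funext ω
    rw [sq, Finset.sum_mul_sum]
    refine Finset.sum_congr rfl fun i _ => Finset.sum_congr rfl fun k _ => ?_
    rw [Finset.sum_mul_sum]
  have intS2 : Integrable (fun ω => (∑ i, ∑ j ∈ univ.filter (fun j => j ≠ i), Y i j ω) ^ 2) μ := by
    rw [hSexp]
    exact integrable_finset_sum _ fun i _ => integrable_finset_sum _ fun k _ =>
      integrable_finset_sum _ fun j _ => integrable_finset_sum _ fun l _ => intYY i j k l
  have hsplit : (∫ ω, ((1 / (n : ℝ)) * (∑ i, (∑ j ∈ univ.filter (fun j => j ≠ i), Y i j ω) ^ 2)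
          - (1 / (n : ℝ)) ^ 2 * (∑ i, ∑ j ∈ univ.filter (fun j => j ≠ i), Y i j ω) ^ 2) ∂μ)
      = (1 / (n : ℝ)) * (∫ ω, (∑ i, (∑ j ∈ univ.filter (fun j => j ≠ i), Y i j ω) ^ 2) ∂μ)
        - (1 / (n : ℝ)) ^ 2 * ∫ ω, (∑ i, ∑ j ∈ univ.filter (fun j => j ≠ i), Y i j ω) ^ 2 ∂μ := by
    rw [integral_sub ((integrable_finset_sum _ fun i _ => intD2 i).const_mul _)
      (intS2.const_mul _), integral_const_mul, integral_const_mul]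
  -- the integral of ∑ D_i^2
  have eD2 : ∀ i, (∫ ω, (∑ j ∈ univ.filter (fun j => j ≠ i), Y i j ω) ^ 2 ∂μ)
      = ∑ j, ∑ k, (if k = j then p i j else p i j * p i k) := by
    intro i
    rw [hDexp i,
      integral_finset_sum _ fun j _ => integrable_finset_sum _ fun k _ => intYY i j i k,
      Finset.sum_congr rfl fun j _ => integral_finset_sum _ fun k _ => intYY i j i k]
    have inner : ∀ j : Fin n, j ≠ i →
        (∑ k ∈ univ.filter (fun k => k ≠ i), ∫ ω, Y i j ω * Y i k ω ∂μ)
        = ∑ k, (if k = j then p i j else p i j * p i k) := by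
      intro j hj
      have e1 : ∀ k : Fin n, k ≠ i → (∫ ω, Y i j ω * Y i k ω ∂μ)
          = (if k = j then p i j else p i j * p i k) := by
        intro k hk
        rw [mom i j i k (Ne.symm hj) (Ne.symm hk)]
        refine if_congr ?_ rfl rfl
        constructor
        · rintro (⟨-, h⟩ | ⟨h1, -⟩)
          · exact h
          · exact absurd h1.symm hj
        · intro h; exact Or.inl ⟨rfl, h⟩
      rw [Finset.sum_congr rfl fun k hk => e1 k (by simpa using hk)]
      refine filter_ne_ext i _ ?_
      rw [if_neg (fun h => hj h.symm), hpdiag, mul_zero]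
    rw [Finset.sum_congr rfl fun j hj => inner j (by simpa using hj)]
    refine filter_ne_ext i _ ?_
    refine Finset.sum_eq_zero fun k _ => ?_
    by_cases h : k = i <;> simp [h, hpdiag]
  have eD2val : (∑ i, ∑ j, ∑ k, (if k = j then p i j else p i j * p i k))
      = (∑ i, (∑ j, p i j) ^ 2) + (∑ i, ∑ j, p i j) - (∑ i, ∑ j, (p i j) ^ 2) := by
    have pt : ∀ i j k : Fin n, (if k = j then p i j else p i j * p i k)
        = p i j * p i k + (if k = j then p i j - p i j * p i k else 0) := by
      intro i j k
      by_cases h : k = j <;> simp [h] <;> try ring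
    rw [sum3_congr _ _ pt]
    simp only [Finset.sum_add_distrib]
    have a1 : (∑ i, ∑ j, ∑ k, p i j * p i k) = ∑ i, (∑ j, p i j) ^ 2 := by
      refine Finset.sum_congr rfl fun i _ => ?_
      rw [sq, Finset.sum_mul_sum]
    have a2 : (∑ i, ∑ j, ∑ k : Fin n, (if k = j then p i j - p i j * p i k else 0))
        = (∑ i, ∑ j, p i j) - (∑ i, ∑ j, (p i j) ^ 2) := by
      have b1 : ∀ i j : Fin n, (∑ k : Fin n, (if k = j then p i j - p i j * p i k else 0))
          = p i j - (p i j) ^ 2 := by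
        intro i j
        rw [sum_single_pt j (fun k => p i j - p i j * p i k), sq]
      rw [Finset.sum_congr rfl fun i _ => Finset.sum_congr rfl fun j _ => b1 i j]
      rw [← Finset.sum_sub_distrib]
      exact Finset.sum_congr rfl fun i _ => Finset.sum_sub_distrib _ _
    rw [a1, a2]; ring
  -- the integral of S^2
  have eS2 : (∫ ω, (∑ i, ∑ j ∈ univ.filter (fun j => j ≠ i), Y i j ω) ^ 2 ∂μ)
      = ∑ i, ∑ j, ∑ k, ∑ l,
        (if (k = i ∧ l = j) ∨ (k = j ∧ l = i) then p i j else p i j * p k l) := by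
    rw [hSexp,
      integral_finset_sum _ fun i _ => integrable_finset_sum _ fun k _ =>
        integrable_finset_sum _ fun j _ => integrable_finset_sum _ fun l _ => intYY i j k l,
      Finset.sum_congr rfl fun i _ => integral_finset_sum _ fun k _ =>
        integrable_finset_sum _ fun j _ => integrable_finset_sum _ fun l _ => intYY i j k l,
      Finset.sum_congr rfl fun i _ => Finset.sum_congr rfl fun k _ =>
        integral_finset_sum _ fun j _ => integrable_finset_sum _ fun l _ => intYY i j k l,
      Finset.sum_congr rfl fun i _ => Finset.sum_congr rfl fun k _ =>
        Finset.sum_congr rfl fun j _ => integral_finset_sum _ fun l _ => intYY i j k l]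
    -- evaluate the inner integrals and extend the filtered sums
    have inner2 : ∀ i k j : Fin n, j ≠ i →
        (∑ l ∈ univ.filter (fun l => l ≠ k), ∫ ω, Y i j ω * Y k l ω ∂μ)
        = ∑ l, (if (k = i ∧ l = j) ∨ (k = j ∧ l = i) then p i j else p i j * p k l) := by
      intro i k j hj
      rw [Finset.sum_congr rfl fun l hl =>
        mom i j k l (Ne.symm hj) (Ne.symm (by simpa using hl))]
      refine filter_ne_ext k _ ?_
      by_cases hc : (k = i ∧ k = j) ∨ (k = j ∧ k = i)
      · have hij : i = j := by omega
        rw [if_pos hc, hij, hpdiag]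
      · rw [if_neg hc, hpdiag, mul_zero]
    have inner3 : ∀ i k : Fin n,
        (∑ j ∈ univ.filter (fun j => j ≠ i), ∑ l,
          (if (k = i ∧ l = j) ∨ (k = j ∧ l = i) then p i j else p i j * p k l))
        = ∑ j, ∑ l, (if (k = i ∧ l = j) ∨ (k = j ∧ l = i) then p i j else p i j * p k l) := by
      intro i k
      refine filter_ne_ext i _ ?_
      refine Finset.sum_eq_zero fun l _ => ?_
      by_cases hc : (k = i ∧ l = i) ∨ (k = i ∧ l = i)
      · rcases hc with ⟨h1, h2⟩ | ⟨h1, h2⟩ <;> simp [h1, h2, hpdiag]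
      · by_cases hc2 : (k = i ∧ l = i) ∨ (k = i ∧ l = i)
        · exact absurd hc2 hc
        · simp [hpdiag]
    rw [Finset.sum_congr rfl fun i _ => Finset.sum_congr rfl fun k _ =>
        Finset.sum_congr rfl fun j hj => inner2 i k j (by simpa using hj),
      Finset.sum_congr rfl fun i _ => Finset.sum_congr rfl fun k _ => inner3 i k]
    exact (sum4_swap23 (fun i j k l =>
      if (k = i ∧ l = j) ∨ (k = j ∧ l = i) then p i j else p i j * p k l)).symm
  have eS2val : (∑ i, ∑ j, ∑ k, ∑ l,
        (if (k = i ∧ l = j) ∨ (k = j ∧ l = i) then p i j else p i j * p k l))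
      = (∑ i, ∑ j, p i j) ^ 2
        + 2 * ((∑ i, ∑ j, p i j) - (∑ i, ∑ j, (p i j) ^ 2)) := by
    have pt : ∀ i j k l : Fin n,
        (if (k = i ∧ l = j) ∨ (k = j ∧ l = i) then p i j else p i j * p k l)
        = p i j * p k l + (if k = i ∧ l = j then p i j - p i j * p k l else 0)
          + (if k = j ∧ l = i then p i j - p i j * p k l else 0) := by
      intro i j k l
      by_cases c1 : k = i ∧ l = j <;> by_cases c2 : k = j ∧ l = i
      · have h0 : p i j = 0 := by
          have hij : i = j := by omega
          rw [hij, hpdiag]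
        rw [if_pos (Or.inl c1), if_pos c1, if_pos c2, h0]; ring
      · rw [if_pos (Or.inl c1), if_pos c1, if_neg c2]; ring
      · rw [if_pos (Or.inr c2), if_neg c1, if_pos c2]; ring
      · rw [if_neg (by tauto), if_neg c1, if_neg c2]; ring
    rw [sum4_congr _ _ pt]
    simp only [Finset.sum_add_distrib]
    have b1 : (∑ i, ∑ j, ∑ k, ∑ l, p i j * p k l) = (∑ i, ∑ j, p i j) ^ 2 :=
      (flat4_P1sq p).symm
    have b2 : (∑ i, ∑ j, ∑ k, ∑ l,
          (if k = i ∧ l = j then p i j - p i j * p k l else 0))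
        = (∑ i, ∑ j, p i j) - (∑ i, ∑ j, (p i j) ^ 2) := by
      have c : ∀ i j : Fin n, (∑ k, ∑ l, (if k = i ∧ l = j then p i j - p i j * p k l else 0))
          = p i j - (p i j) ^ 2 := by
        intro i j
        rw [sum_pair_pt i j (fun k l => p i j - p i j * p k l), sq]
      rw [Finset.sum_congr rfl fun i _ => Finset.sum_congr rfl fun j _ => c i j,
        ← Finset.sum_sub_distrib]
      exact Finset.sum_congr rfl fun i _ => Finset.sum_sub_distrib _ _
    have b3 : (∑ i, ∑ j, ∑ k, ∑ l,
          (if k = j ∧ l = i then p i j - p i j * p k l else 0))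
        = (∑ i, ∑ j, p i j) - (∑ i, ∑ j, (p i j) ^ 2) := by
      have c : ∀ i j : Fin n, (∑ k, ∑ l, (if k = j ∧ l = i then p i j - p i j * p k l else 0))
          = p i j - (p i j) ^ 2 := by
        intro i j
        rw [sum_pair_pt j i (fun k l => p i j - p i j * p k l), hpsym j i, sq]
      rw [Finset.sum_congr rfl fun i _ => Finset.sum_congr rfl fun j _ => c i j,
        ← Finset.sum_sub_distrib]
      exact Finset.sum_congr rfl fun i _ => Finset.sum_sub_distrib _ _
    rw [b1, b2, b3]; ring
  -- put everything together
  rw [hcong, hsplit,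
    integral_finset_sum _ fun i _ => intD2 i,
    Finset.sum_congr rfl fun i _ => eD2 i,
    eD2val, eS2, eS2val]
  have cp := comb_pair p hpsym hpdiag
  have cw := comb_wedge p hpsym hpdiag
  have cq := comb_quad p hpsym hpdiag
  have hT : (∑ i, ∑ j ∈ univ.filter (fun j => i < j), p i j)
      = (∑ i, ∑ j, p i j) / 2 := by linarith [cp]
  have hW : (∑ i, ∑ j ∈ univ.filter (fun j => i < j), ∑ k ∈ univ.filter (fun k => j < k),
        (p i j * p i k + p i j * p j k + p i k * p j k))
      = ((∑ i, (∑ j, p i j) ^ 2) - ∑ i, ∑ j, (p i j) ^ 2) / 2 := by linarith [cw]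
  have hM : (∑ i, ∑ j ∈ univ.filter (fun j => i < j), ∑ k ∈ univ.filter (fun k => j < k),
        ∑ l ∈ univ.filter (fun l => k < l),
        (p i j * p k l + p i k * p j l + p i l * p j k))
      = ((∑ i, ∑ j, p i j) ^ 2 + 2 * (∑ i, ∑ j, (p i j) ^ 2)
          - 4 * (∑ i, (∑ j, p i j) ^ 2)) / 8 := by linarith [cq]
  rw [hT, hW, hM]
  field_simp
  ring
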